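/- Let (X,τ) be a Hausdorff topological space and δ an extended semidistance on X which is lower semicontinuous with respect to the product topology. Let Σ be the set of continuous nondecreasing surjections σ : [0,1] → [0,1], Σ' ⊆ Σ the increasing homeomorphisms of [0,1], and Σ₂ ⊆ Σ the elements with |σ(r) − σ(s)| ≤ 2|r − s| for all r, s. For τ-continuous curves γ, γ' : [0,1] → X set δ_C(γ,γ') := sup_{t∈[0,1]} δ(γ(t),γ'(t)) and δ_A(γ,γ') := inf{ δ_C(γ∘σ₁, γ'∘σ₂) : σ₁, σ₂ ∈ Σ }. If γ₁, γ₂, γ₃ : [0,1] → X are τ-continuous and satisfy lim_{s→t} δ(γ_i(s),γ_i(t)) = 0 for every t ∈ [0,1] (i = 1,2,3), then: (i) δ_A(γ₁,γ₂) = inf{ δ_C(γ₁, γ₂∘σ) : σ ∈ Σ' }; (ii) the infimum defining δ_A(γ₁,γ₂) is attained by some pair σ₁, σ₂ ∈ Σ₂; (iii) δ_A(γ₁,γ₃) ≤ δ_A(γ₁,γ₂) + δ_A(γ₂,γ₃). -/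

import Mathlib

open Filter Set Topology unitInterval
open scoped ENNReal

/-- The set `Σ` of continuous nondecreasing surjections of `[0,1]` onto itself. -/
def SigmaAll : Set (I → I) :=
  {f | Continuous f ∧ Monotone f ∧ Function.Surjective f}

/-- The set `Σ'` of increasing homeomorphisms of `[0,1]`. -/
def SigmaHomeo : Set (I → I) :=
  {f | Continuous f ∧ StrictMono f ∧ Function.Surjective f}

/-- The set `Σ₂` of elements of `Σ` which are `2`-Lipschitz. -/
def SigmaTwo : Set (I → I) :=
  {f ∈ SigmaAll | ∀ r s : I, |(f r : ℝ) - (f s : ℝ)| ≤ 2 * |(r : ℝ) - (s : ℝ)|}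

/-- The uniform (sup) extended semidistance between two curves. -/
noncomputable def dC {X : Type*} (δ : X → X → ℝ≥0∞) (γ γ' : I → X) : ℝ≥0∞ :=
  ⨆ t : I, δ (γ t) (γ' t)

/-- The reparametrization-invariant extended semidistance between two curves. -/
noncomputable def dA {X : Type*} (δ : X → X → ℝ≥0∞) (γ γ' : I → X) : ℝ≥0∞ :=
  ⨅ f₁ ∈ SigmaAll, ⨅ f₂ ∈ SigmaAll, dC δ (γ ∘ f₁) (γ' ∘ f₂)

lemma id_mem_sigmaAll : id ∈ SigmaAll :=
  ⟨continuous_id, monotone_id, Function.surjective_id⟩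

lemma id_mem_sigmaHomeo : id ∈ SigmaHomeo :=
  ⟨continuous_id, strictMono_id, Function.surjective_id⟩

lemma id_mem_sigmaTwo : id ∈ SigmaTwo := by
  refine ⟨id_mem_sigmaAll, fun r s => ?_⟩
  simp only [id]
  nlinarith [abs_nonneg ((r:ℝ) - s)]

lemma sigmaHomeo_subset : SigmaHomeo ⊆ SigmaAll :=
  fun f hf => ⟨hf.1, hf.2.1.monotone, hf.2.2⟩

lemma sigmaTwo_subset : SigmaTwo ⊆ SigmaAll := fun _ hf => hf.1

lemma sigmaAll_zero {f : I → I} (hf : f ∈ SigmaAll) : f 0 = 0 := by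
  obtain ⟨t, ht⟩ := hf.2.2 0
  have := hf.2.1 (show (0:I) ≤ t from t.2.1)
  rw [ht] at this
  exact le_antisymm this (f 0).2.1

lemma sigmaAll_one {f : I → I} (hf : f ∈ SigmaAll) : f 1 = 1 := by
  obtain ⟨t, ht⟩ := hf.2.2 1
  have := hf.2.1 (show t ≤ (1:I) from t.2.2)
  rw [ht] at this
  exact le_antisymm (f 1).2.2 this

lemma dA_le_dC {X : Type*} (δ : X → X → ℝ≥0∞) (γ γ' : I → X) {f₁ f₂ : I → I}
    (h₁ : f₁ ∈ SigmaAll) (h₂ : f₂ ∈ SigmaAll) : dA δ γ γ' ≤ dC δ (γ ∘ f₁) (γ' ∘ f₂) := by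
  exact le_trans (iInf₂_le f₁ h₁) (iInf₂_le f₂ h₂)

lemma dC_triangle {X : Type*} (δ : X → X → ℝ≥0∞) (hδtri : ∀ x y z, δ x z ≤ δ x y + δ y z)
    (γ γ' γ'' : I → X) : dC δ γ γ'' ≤ dC δ γ γ' + dC δ γ' γ'' := by
  refine iSup_le fun t => (hδtri _ (γ' t) _).trans (add_le_add ?_ ?_)
  · exact le_iSup (fun t => δ (γ t) (γ' t)) t
  · exact le_iSup (fun t => δ (γ' t) (γ'' t)) t

lemma dC_comp_surj {X : Type*} (δ : X → X → ℝ≥0∞) (γ γ' : I → X) {g : I → I}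
    (hg : Function.Surjective g) : dC δ (γ ∘ g) (γ' ∘ g) = dC δ γ γ' :=
  hg.iSup_comp fun t => δ (γ t) (γ' t)

lemma unif_cont {X : Type*} [TopologicalSpace X] (δ : X → X → ℝ≥0∞)
    (hδsymm : ∀ x y, δ x y = δ y x)
    (hδtri : ∀ x y z, δ x z ≤ δ x y + δ y z)
    {γ : I → X} (hδγ : ∀ t : I, Tendsto (fun s => δ (γ s) (γ t)) (𝓝 t) (𝓝 0))
    {ε : ℝ≥0∞} (hε : 0 < ε) :
    ∃ η : ℝ, 0 < η ∧ ∀ s t : I, |(s:ℝ) - (t:ℝ)| ≤ η → δ (γ s) (γ t) ≤ ε := by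
  by_contra hcon
  push_neg at hcon
  -- for each n pick sₙ tₙ with |sₙ-tₙ| ≤ 1/(n+1) and δ > ε
  have hsel : ∀ n : ℕ, ∃ p : I × I, |(p.1:ℝ) - (p.2:ℝ)| ≤ 1/(n+1) ∧ ε < δ (γ p.1) (γ p.2) := by
    intro n
    obtain ⟨s, t, h1, h2⟩ := hcon (1/(n+1)) (by positivity)
    exact ⟨(s, t), h1, h2⟩
  choose p hp1 hp2 using hsel
  obtain ⟨u, -, φ, hφ, hu⟩ := (isCompact_univ (X := I)).tendsto_subseq
    (x := fun n => (p n).1) (fun n => mem_univ _)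
  -- (p (φ n)).2 also tends to u
  have hdist : Tendsto (fun n => |(((p (φ n)).1 : ℝ)) - ((p (φ n)).2 : ℝ)|) atTop (𝓝 0) := by
    have h0 : Tendsto (fun n : ℕ => 1/((φ n : ℝ)+1)) atTop (𝓝 0) :=
      tendsto_one_div_add_atTop_nhds_zero_nat.comp hφ.tendsto_atTop
    refine squeeze_zero (fun n => abs_nonneg _) (fun n => hp1 (φ n)) h0
  have hv : Tendsto (fun n => ((p (φ n)).2 : I)) atTop (𝓝 u) := by
    rw [tendsto_iff_dist_tendsto_zero]
    have h1 : Tendsto (fun n => dist ((p (φ n)).1) u) atTop (𝓝 0) := by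
      rw [← tendsto_iff_dist_tendsto_zero]; exact hu
    have := h1.add hdist
    rw [add_zero] at this
    refine squeeze_zero (fun n => dist_nonneg) (fun n => ?_) this
    calc dist ((p (φ n)).2) u ≤ dist ((p (φ n)).2) ((p (φ n)).1) + dist ((p (φ n)).1) u :=
          dist_triangle _ _ _
      _ = dist ((p (φ n)).1) u + |(((p (φ n)).1 : ℝ)) - ((p (φ n)).2 : ℝ)| := by
          rw [Subtype.dist_eq, Real.dist_eq, abs_sub_comm]; ring
  -- δ(γ sₙ, γ u) → 0 and δ(γ tₙ, γ u) → 0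
  have hA : Tendsto (fun n => δ (γ ((p (φ n)).1)) (γ u)) atTop (𝓝 0) := (hδγ u).comp hu
  have hB : Tendsto (fun n => δ (γ ((p (φ n)).2)) (γ u)) atTop (𝓝 0) := (hδγ u).comp hv
  -- eventually the sum is < ε, contradiction
  have hev : ∀ᶠ n in atTop, δ (γ ((p (φ n)).1)) (γ ((p (φ n)).2)) < ε := by
    rcases eq_or_ne ε ⊤ with rfl | htop
    · have hA' := hA.eventually_lt_const (show (0:ℝ≥0∞) < ⊤ by simp)
      have hB' := hB.eventually_lt_const (show (0:ℝ≥0∞) < ⊤ by simp)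
      filter_upwards [hA', hB'] with n h1 h2
      calc δ (γ ((p (φ n)).1)) (γ ((p (φ n)).2))
          ≤ δ (γ ((p (φ n)).1)) (γ u) + δ (γ u) (γ ((p (φ n)).2)) := hδtri _ _ _
        _ < ⊤ := by rw [hδsymm (γ u)]; exact ENNReal.add_lt_top.2 ⟨h1, h2⟩
    · have hhalf : (0:ℝ≥0∞) < ε/2 := ENNReal.div_pos hε.ne' (by norm_num)
      have hA' := hA.eventually_lt_const hhalf
      have hB' := hB.eventually_lt_const hhalf
      filter_upwards [hA', hB'] with n h1 h2
      calc δ (γ ((p (φ n)).1)) (γ ((p (φ n)).2))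
          ≤ δ (γ ((p (φ n)).1)) (γ u) + δ (γ u) (γ ((p (φ n)).2)) := hδtri _ _ _
        _ < ε/2 + ε/2 := by rw [hδsymm (γ u)]; exact ENNReal.add_lt_add h1 h2
        _ = ε := ENNReal.add_halves ε
  obtain ⟨n, hn⟩ := hev.exists
  exact absurd (hp2 (φ n)) (not_lt.2 hn.le)
-- surjectivity from endpoints
lemma surj_of_endpoints {f : I → I} (hc : Continuous f) (h0 : f 0 = 0) (h1 : f 1 = 1) :
    Function.Surjective f := by
  intro y
  have : y ∈ Icc (f 0) (f 1) := by
    rw [h0, h1]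
    exact ⟨show (0:I) ≤ y from y.2.1, show y ≤ (1:I) from y.2.2⟩
  exact intermediate_value_univ 0 1 hc this

noncomputable def approx (sg : I → I) (n : ℕ) : I → I := fun t =>
  ⟨((n : ℝ) * (sg t : ℝ) + (t : ℝ)) / (n + 1), by
    constructor
    · have := (sg t).2.1; have := t.2.1; positivity
    · rw [div_le_one (by positivity)]
      have := (sg t).2.2; have := t.2.2
      nlinarith⟩

lemma approx_strictMono {sg : I → I} (hsg : Monotone sg) (n : ℕ) : StrictMono (approx sg n) := by
  intro a b hab
  rw [← Subtype.coe_lt_coe]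
  show ((n : ℝ) * (sg a : ℝ) + a) / (n+1) < ((n : ℝ) * (sg b : ℝ) + b) / (n+1)
  have h1 : (sg a : ℝ) ≤ sg b := Subtype.coe_le_coe.2 (hsg hab.le)
  have h2 : (a : ℝ) < b := Subtype.coe_lt_coe.2 hab
  have h3 : (0:ℝ) < n + 1 := by positivity
  apply div_lt_div_of_pos_right ?_ h3
  nlinarith

lemma approx_continuous {sg : I → I} (hsg : Continuous sg) (n : ℕ) : Continuous (approx sg n) := by
  apply Continuous.subtype_mk
  fun_prop

lemma approx_mem_sigmaHomeo {sg : I → I} (hsg : sg ∈ SigmaAll) (n : ℕ) :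
    approx sg n ∈ SigmaHomeo := by
  have hc := approx_continuous hsg.1 n
  have hm := approx_strictMono hsg.2.1 n
  refine ⟨hc, hm, surj_of_endpoints hc ?_ ?_⟩
  · ext1
    show ((n : ℝ) * (sg 0 : ℝ) + ((0:I) : ℝ)) / (n+1) = 0
    rw [sigmaAll_zero hsg]
    norm_num
  · ext1
    show ((n : ℝ) * (sg 1 : ℝ) + ((1:I) : ℝ)) / (n+1) = 1
    rw [sigmaAll_one hsg]
    norm_num
    field_simp
    exact Nat.cast_add_one_ne_zero n

lemma approx_close {sg : I → I} (n : ℕ) (t : I) :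
    |(approx sg n t : ℝ) - (sg t : ℝ)| ≤ 1/(n+1) := by
  show |((n : ℝ) * (sg t : ℝ) + t) / (n+1) - sg t| ≤ 1/(n+1)
  have h : ((n : ℝ) * (sg t : ℝ) + t) / (n+1) - sg t = ((t:ℝ) - sg t)/(n+1) := by
    field_simp; ring
  rw [h, abs_div, abs_of_pos (show (0:ℝ) < (n:ℝ)+1 by positivity)]
  rw [div_le_div_iff_of_pos_right (by positivity : (0:ℝ) < (n:ℝ)+1)]
  have h1 := t.2.1; have h2 := t.2.2; have h3 := (sg t).2.1; have h4 := (sg t).2.2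
  rw [abs_le]; constructor <;> nlinarith

lemma sigmaHomeo_inv {f : I → I} (hf : f ∈ SigmaHomeo) :
    ∃ g ∈ SigmaHomeo, ∀ t, f (g t) = t := by
  obtain ⟨hc, hm, hs⟩ := hf
  let e : I ≃o I := StrictMono.orderIsoOfSurjective f hm hs
  refine ⟨e.symm, ⟨e.symm.continuous, e.symm.strictMono, e.symm.surjective⟩, fun t => ?_⟩
  have : f (e.symm t) = e (e.symm t) := by
    rw [StrictMono.coe_orderIsoOfSurjective]
  rw [this, OrderIso.apply_symm_apply]

lemma sigmaHomeo_comp {f g : I → I} (hf : f ∈ SigmaHomeo) (hg : g ∈ SigmaHomeo) :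
    f ∘ g ∈ SigmaHomeo :=
  ⟨hf.1.comp hg.1, hf.2.1.comp hg.2.1, hf.2.2.comp hg.2.2⟩

lemma key1 {X : Type*} [TopologicalSpace X] (δ : X → X → ℝ≥0∞)
    (hδsymm : ∀ x y, δ x y = δ y x)
    (hδtri : ∀ x y z, δ x z ≤ δ x y + δ y z)
    {γ γ' : I → X}
    (hδγ : ∀ t : I, Tendsto (fun s => δ (γ s) (γ t)) (𝓝 t) (𝓝 0))
    (hδγ' : ∀ t : I, Tendsto (fun s => δ (γ' s) (γ' t)) (𝓝 t) (𝓝 0)) :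
    dA δ γ γ' = ⨅ f ∈ SigmaHomeo, dC δ γ (γ' ∘ f) := by
  apply le_antisymm
  · refine le_iInf₂ fun f hf => ?_
    have := dA_le_dC δ γ γ' id_mem_sigmaAll (sigmaHomeo_subset hf)
    simpa using this
  · refine le_iInf₂ fun s₁ h₁ => le_iInf₂ fun s₂ h₂ => ?_
    set M := dC δ (γ ∘ s₁) (γ' ∘ s₂) with hM
    refine ENNReal.le_of_forall_pos_le_add fun ε hε hMtop => ?_
    have hε2 : (0:ℝ≥0∞) < (ε:ℝ≥0∞)/2 := by
      apply ENNReal.div_pos (by exact_mod_cast hε.ne') (by norm_num)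
    obtain ⟨η₁, hη₁, H₁⟩ := unif_cont δ hδsymm hδtri hδγ hε2
    obtain ⟨η₂, hη₂, H₂⟩ := unif_cont δ hδsymm hδtri hδγ' hε2
    obtain ⟨n, hn⟩ : ∃ n : ℕ, 1/((n:ℝ)+1) < min η₁ η₂ := exists_nat_one_div_lt (lt_min hη₁ hη₂)
    have hf₁ := approx_mem_sigmaHomeo h₁ n
    have hf₂ := approx_mem_sigmaHomeo h₂ n
    obtain ⟨g, hg, hfg⟩ := sigmaHomeo_inv hf₁
    have hmem := sigmaHomeo_comp hf₂ hg
    refine le_trans (iInf₂_le _ hmem) ?_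
    refine iSup_le fun t => ?_
    show δ (γ t) (γ' (approx s₂ n (g t))) ≤ M + ε
    set s := g t with hs
    have ht : approx s₁ n s = t := hfg t
    have b1 : δ (γ t) (γ (s₁ s)) ≤ (ε:ℝ≥0∞)/2 := by
      rw [← ht]
      exact H₁ _ _ ((approx_close n s).trans (hn.le.trans (min_le_left _ _)))
    have b2 : δ (γ (s₁ s)) (γ' (s₂ s)) ≤ M := by
      rw [hM]
      exact le_iSup (fun u => δ ((γ ∘ s₁) u) ((γ' ∘ s₂) u)) s
    have b3 : δ (γ' (s₂ s)) (γ' (approx s₂ n s)) ≤ (ε:ℝ≥0∞)/2 := by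
      rw [hδsymm]
      exact H₂ _ _ ((approx_close n s).trans (hn.le.trans (min_le_right _ _)))
    calc δ (γ t) (γ' (approx s₂ n s))
        ≤ δ (γ t) (γ (s₁ s)) + δ (γ (s₁ s)) (γ' (approx s₂ n s)) := hδtri _ _ _
      _ ≤ δ (γ t) (γ (s₁ s)) + (δ (γ (s₁ s)) (γ' (s₂ s)) + δ (γ' (s₂ s)) (γ' (approx s₂ n s))) :=
          add_le_add le_rfl (hδtri _ _ _)
      _ ≤ (ε:ℝ≥0∞)/2 + (M + (ε:ℝ≥0∞)/2) := add_le_add b1 (add_le_add b2 b3)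
      _ = M + ((ε:ℝ≥0∞)/2 + (ε:ℝ≥0∞)/2) := by abel
      _ = M + ε := by rw [ENNReal.add_halves]

def K2 : Set (I → I) :=
  {f | f 0 = 0 ∧ f 1 = 1 ∧ Monotone f ∧
    ∀ r s : I, |(f r : ℝ) - (f s : ℝ)| ≤ 2 * |(r : ℝ) - (s : ℝ)|}

lemma K2_subset_sigmaTwo : K2 ⊆ SigmaTwo := by
  rintro f ⟨h0, h1, hm, hl⟩
  have hlip : LipschitzWith 2 f := by
    apply LipschitzWith.of_dist_le_mul
    intro x y
    rw [Subtype.dist_eq, Subtype.dist_eq, Real.dist_eq, Real.dist_eq]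
    exact_mod_cast hl x y
  have hc : Continuous f := hlip.continuous
  exact ⟨⟨hc, hm, surj_of_endpoints hc h0 h1⟩, hl⟩

lemma sigmaTwo_subset_K2 : SigmaTwo ⊆ K2 := by
  rintro f ⟨hf, hl⟩
  exact ⟨sigmaAll_zero hf, sigmaAll_one hf, hf.2.1, hl⟩

lemma isClosed_K2 : IsClosed K2 := by
  have h0 : IsClosed {f : I → I | f 0 = 0} := isClosed_eq (continuous_apply 0) continuous_const
  have h1 : IsClosed {f : I → I | f 1 = 1} := isClosed_eq (continuous_apply 1) continuous_const
  have hm : IsClosed {f : I → I | Monotone f} := by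
    have he : {f : I → I | Monotone f} =
        ⋂ (p : I × I) (_ : p.1 ≤ p.2), {f : I → I | f p.1 ≤ f p.2} := by
      ext f
      simp only [mem_iInter, mem_setOf_eq]
      exact ⟨fun h p hp => h hp, fun h a b hab => h (a, b) hab⟩
    rw [he]
    exact isClosed_iInter fun p => isClosed_iInter fun _ =>
      isClosed_le (continuous_apply p.1) (continuous_apply p.2)
  have hl : IsClosed {f : I → I |
      ∀ r s : I, |(f r : ℝ) - (f s : ℝ)| ≤ 2 * |(r : ℝ) - (s : ℝ)|} := by
    have he : {f : I → I | ∀ r s : I, |(f r : ℝ) - (f s : ℝ)| ≤ 2 * |(r : ℝ) - (s : ℝ)|} =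
        ⋂ (p : I × I), {f : I → I | |(f p.1 : ℝ) - (f p.2 : ℝ)| ≤ 2 * |(p.1 : ℝ) - (p.2 : ℝ)|} := by
      ext f
      simp only [mem_iInter, mem_setOf_eq]
      exact ⟨fun h p => h p.1 p.2, fun h r s => h (r, s)⟩
    rw [he]
    refine isClosed_iInter fun p => isClosed_le ?_ continuous_const
    have c1 : Continuous fun f : I → I => (f p.1 : ℝ) :=
      continuous_subtype_val.comp (continuous_apply p.1)
    have c2 : Continuous fun f : I → I => (f p.2 : ℝ) :=
      continuous_subtype_val.comp (continuous_apply p.2)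
    exact (c1.sub c2).abs
  have : K2 = {f : I → I | f 0 = 0} ∩ ({f | f 1 = 1} ∩ ({f | Monotone f} ∩
      {f | ∀ r s : I, |(f r : ℝ) - (f s : ℝ)| ≤ 2 * |(r : ℝ) - (s : ℝ)|})) := by
    ext f; simp [K2, and_assoc]
  rw [this]
  exact h0.inter (h1.inter (hm.inter hl))

lemma isCompact_K2 : IsCompact K2 := isClosed_K2.isCompact

lemma factor {s₁ s₂ : I → I} (h₁ : s₁ ∈ SigmaAll) (h₂ : s₂ ∈ SigmaAll) :
    ∃ t₁ ∈ SigmaTwo, ∃ t₂ ∈ SigmaTwo, ∃ g : I → I,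
      Function.Surjective g ∧ s₁ = t₁ ∘ g ∧ s₂ = t₂ ∘ g := by
  set g : I → I := fun t => ⟨((s₁ t : ℝ) + (s₂ t : ℝ)) / 2, by
    constructor
    · have := (s₁ t).2.1; have := (s₂ t).2.1; positivity
    · have := (s₁ t).2.2; have := (s₂ t).2.2; linarith⟩ with hgdef
  have hgcoe : ∀ t, (g t : ℝ) = ((s₁ t : ℝ) + (s₂ t : ℝ)) / 2 := fun t => rfl
  have hgmono : Monotone g := by
    intro a b hab
    rw [← Subtype.coe_le_coe, hgcoe, hgcoe]
    have v1 : (s₁ a : ℝ) ≤ s₁ b := Subtype.coe_le_coe.2 (h₁.2.1 hab)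
    have v2 : (s₂ a : ℝ) ≤ s₂ b := Subtype.coe_le_coe.2 (h₂.2.1 hab)
    linarith
  have hgc : Continuous g := by
    apply Continuous.subtype_mk
    have c1 : Continuous fun t : I => (s₁ t : ℝ) := continuous_subtype_val.comp h₁.1
    have c2 : Continuous fun t : I => (s₂ t : ℝ) := continuous_subtype_val.comp h₂.1
    fun_prop
  have hg0 : g 0 = 0 := by
    ext1; rw [hgcoe, sigmaAll_zero h₁, sigmaAll_zero h₂]; norm_num
  have hg1 : g 1 = 1 := by
    ext1; rw [hgcoe, sigmaAll_one h₁, sigmaAll_one h₂]; norm_num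
  have hgs : Function.Surjective g := surj_of_endpoints hgc hg0 hg1
  set h : I → I := Function.surjInv hgs with hhdef
  have hgh : ∀ a, g (h a) = a := Function.rightInverse_surjInv hgs
  -- level sets: g a = g b → sᵢ a = sᵢ b
  have hlevel : ∀ a b : I, g a = g b → s₁ a = s₁ b ∧ s₂ a = s₂ b := by
    have key : ∀ a b : I, a ≤ b → g a = g b → s₁ a = s₁ b ∧ s₂ a = s₂ b := by
      intro a b hab hg
      have hsum : (s₁ a : ℝ) + (s₂ a : ℝ) = (s₁ b : ℝ) + (s₂ b : ℝ) := by
        have := congrArg (fun x : I => (x : ℝ)) hg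
        simp only [hgcoe] at this
        linarith
      have v1 : (s₁ a : ℝ) ≤ s₁ b := Subtype.coe_le_coe.2 (h₁.2.1 hab)
      have v2 : (s₂ a : ℝ) ≤ s₂ b := Subtype.coe_le_coe.2 (h₂.2.1 hab)
      exact ⟨Subtype.ext (by linarith), Subtype.ext (by linarith)⟩
    intro a b hg
    rcases le_total a b with hab | hab
    · exact key a b hab hg
    · obtain ⟨e1, e2⟩ := key b a hab hg.symm
      exact ⟨e1.symm, e2.symm⟩
  -- h is "monotone" for strict inequalities
  have hh : ∀ a b : I, a < b → h a ≤ h b := by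
    intro a b hab
    by_contra hc
    push_neg at hc
    have := hgmono hc.le
    rw [hgh, hgh] at this
    exact absurd (lt_of_lt_of_le hab this) (lt_irrefl _)
  have hhle : ∀ a b : I, a ≤ b → h a ≤ h b ∨ h a = h b := by
    intro a b hab
    rcases eq_or_lt_of_le hab with rfl | hab
    · exact Or.inr rfl
    · exact Or.inl (hh a b hab)
  -- generic factor construction
  have main : ∀ (s : I → I), s ∈ SigmaAll → (∀ a b : I, g a = g b → s a = s b) →
      (∀ a b : I, h a ≤ h b →
        (s (h b) : ℝ) - (s (h a) : ℝ) ≤ 2 * ((b : ℝ) - (a : ℝ))) →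
      (s ∘ h) ∈ K2 ∧ s = (s ∘ h) ∘ g := by
    intro s hs hlev hcmp
    have hmono : Monotone (s ∘ h) := by
      intro a b hab
      rcases hhle a b hab with hle | heq
      · exact hs.2.1 hle
      · show s (h a) ≤ s (h b); rw [heq]
    have hcomp : s = (s ∘ h) ∘ g := by
      funext t
      exact (hlev (h (g t)) t (hgh (g t))).symm
    refine ⟨⟨?_, ?_, hmono, ?_⟩, hcomp⟩
    · show s (h 0) = 0
      rw [hlev (h 0) 0 (by rw [hgh, hg0]), sigmaAll_zero hs]
    · show s (h 1) = 1
      rw [hlev (h 1) 1 (by rw [hgh, hg1]), sigmaAll_one hs]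
    · have key : ∀ a b : I, a ≤ b →
          |(s (h a) : ℝ) - (s (h b) : ℝ)| ≤ 2 * |(a : ℝ) - (b : ℝ)| := by
        intro a b hab
        have habr : (a : ℝ) ≤ b := Subtype.coe_le_coe.2 hab
        have hmle : s (h a) ≤ s (h b) := hmono hab
        have hmler : (s (h a) : ℝ) ≤ s (h b) := Subtype.coe_le_coe.2 hmle
        rw [abs_sub_comm, abs_of_nonneg (by linarith), abs_sub_comm, abs_of_nonneg (by linarith)]
        rcases hhle a b hab with hle | heq
        · have := hcmp a b hle
          linarith
        · rw [heq]
          have := (b : ℝ); have h2 := habr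
          simp only [sub_self]  -- s(h b) - s(h b)... careful
          linarith [sub_nonneg.2 habr]
      intro r r'
      rcases le_total r r' with hrr | hrr
      · exact key r r' hrr
      · rw [abs_sub_comm, abs_sub_comm (r : ℝ)]
        exact key r' r hrr
  -- apply to s₁ and s₂
  have hcmp₁ : ∀ a b : I, h a ≤ h b → (s₁ (h b) : ℝ) - (s₁ (h a) : ℝ) ≤ 2 * ((b:ℝ) - (a:ℝ)) := by
    intro a b hab
    have v2 : (s₂ (h a) : ℝ) ≤ s₂ (h b) := Subtype.coe_le_coe.2 (h₂.2.1 hab)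
    have e1 : (g (h a) : ℝ) = a := by rw [hgh]
    have e2 : (g (h b) : ℝ) = b := by rw [hgh]
    rw [hgcoe] at e1 e2
    linarith
  have hcmp₂ : ∀ a b : I, h a ≤ h b → (s₂ (h b) : ℝ) - (s₂ (h a) : ℝ) ≤ 2 * ((b:ℝ) - (a:ℝ)) := by
    intro a b hab
    have v1 : (s₁ (h a) : ℝ) ≤ s₁ (h b) := Subtype.coe_le_coe.2 (h₁.2.1 hab)
    have e1 : (g (h a) : ℝ) = a := by rw [hgh]
    have e2 : (g (h b) : ℝ) = b := by rw [hgh]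
    rw [hgcoe] at e1 e2
    linarith
  obtain ⟨m₁, e₁⟩ := main s₁ h₁ (fun a b hg => (hlevel a b hg).1) hcmp₁
  obtain ⟨m₂, e₂⟩ := main s₂ h₂ (fun a b hg => (hlevel a b hg).2) hcmp₂
  exact ⟨s₁ ∘ h, K2_subset_sigmaTwo m₁, s₂ ∘ h, K2_subset_sigmaTwo m₂, g, hgs, e₁, e₂⟩

lemma key2 {X : Type*} [TopologicalSpace X] (δ : X → X → ℝ≥0∞)
    (hδlsc : LowerSemicontinuous (fun p : X × X => δ p.1 p.2))
    (γ γ' : I → X) (hγ : Continuous γ) (hγ' : Continuous γ') :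
    ∃ f₁ ∈ SigmaTwo, ∃ f₂ ∈ SigmaTwo, dC δ (γ ∘ f₁) (γ' ∘ f₂) = dA δ γ γ' := by
  classical
  set m := dA δ γ γ' with hm
  set G : (I → I) × (I → I) → ℝ≥0∞ := fun p => dC δ (γ ∘ p.1) (γ' ∘ p.2) with hG
  have hGlsc : LowerSemicontinuous G := by
    apply lowerSemicontinuous_iSup (f := fun (t : I) (p : (I → I) × (I → I)) =>
      δ (γ (p.1 t)) (γ' (p.2 t)))
    intro t
    have hcont : Continuous fun p : (I → I) × (I → I) => (γ (p.1 t), γ' (p.2 t)) := by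
      apply Continuous.prodMk
      · exact hγ.comp ((continuous_apply t).comp continuous_fst)
      · exact hγ'.comp ((continuous_apply t).comp continuous_snd)
    exact hδlsc.comp hcont
  have hlb : ∀ p : (I → I) × (I → I), p.1 ∈ SigmaTwo → p.2 ∈ SigmaTwo → m ≤ G p :=
    fun p hp1 hp2 => dA_le_dC δ γ γ' (sigmaTwo_subset hp1) (sigmaTwo_subset hp2)
  have happrox : ∀ a : ℝ≥0∞, m < a → ∃ p ∈ K2 ×ˢ K2, G p ≤ a := by
    intro a ha
    rw [hm, dA] at ha
    rw [iInf_lt_iff] at ha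
    obtain ⟨s₁, ha⟩ := ha
    rw [iInf_lt_iff] at ha
    obtain ⟨hs₁, ha⟩ := ha
    rw [iInf_lt_iff] at ha
    obtain ⟨s₂, ha⟩ := ha
    rw [iInf_lt_iff] at ha
    obtain ⟨hs₂, ha⟩ := ha
    obtain ⟨t₁, ht₁, t₂, ht₂, g, hgs, e₁, e₂⟩ := factor hs₁ hs₂
    refine ⟨(t₁, t₂), ⟨sigmaTwo_subset_K2 ht₁, sigmaTwo_subset_K2 ht₂⟩, ?_⟩
    have : G (t₁, t₂) = dC δ (γ ∘ s₁) (γ' ∘ s₂) := by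
      show dC δ (γ ∘ t₁) (γ' ∘ t₂) = _
      rw [← dC_comp_surj δ (γ ∘ t₁) (γ' ∘ t₂) hgs]
      congr 1
      · rw [e₁]; rfl
      · rw [e₂]; rfl
    rw [this]
    exact ha.le
  rcases eq_or_ne m ⊤ with htop | htop
  · refine ⟨id, id_mem_sigmaTwo, id, id_mem_sigmaTwo, le_antisymm ?_ ?_⟩
    · rw [htop]; exact le_top
    · exact hlb (id, id) id_mem_sigmaTwo id_mem_sigmaTwo
  · -- nested compact sets
    have hne : Nonempty {a : ℝ≥0∞ // m < a} := ⟨⟨⊤, lt_top_iff_ne_top.2 htop⟩⟩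
    set S : {a : ℝ≥0∞ // m < a} → Set ((I → I) × (I → I)) :=
      fun a => (K2 ×ˢ K2) ∩ {p | G p ≤ a} with hS
    have hScl : ∀ a, IsClosed (S a) :=
      fun a => (isClosed_K2.prod isClosed_K2).inter (hGlsc.isClosed_preimage a)
    have hScp : ∀ a, IsCompact (S a) := fun a => (hScl a).isCompact
    have hSne : ∀ a, (S a).Nonempty := by
      intro a
      obtain ⟨p, hp, hpa⟩ := happrox a a.2
      exact ⟨p, hp, hpa⟩
    have hdir : Directed (· ⊇ ·) S := by
      intro a b
      refine ⟨⟨min a b, lt_min a.2 b.2⟩, ?_, ?_⟩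
      · rintro p ⟨hp, hpa⟩
        exact ⟨hp, le_trans hpa (min_le_left (a:ℝ≥0∞) b)⟩
      · rintro p ⟨hp, hpa⟩
        exact ⟨hp, le_trans hpa (min_le_right (a:ℝ≥0∞) b)⟩
    obtain ⟨p, hp⟩ := IsCompact.nonempty_iInter_of_directed_nonempty_isCompact_isClosed
      S hdir hSne hScp hScl
    simp only [mem_iInter] at hp
    have hpK : p ∈ K2 ×ˢ K2 := (hp ⟨⊤, lt_top_iff_ne_top.2 htop⟩).1
    have hple : G p ≤ m := by
      apply le_of_forall_gt_imp_ge_of_dense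
      intro a ha
      exact (hp ⟨a, ha⟩).2
    refine ⟨p.1, K2_subset_sigmaTwo hpK.1, p.2, K2_subset_sigmaTwo hpK.2,
      le_antisymm hple (hlb p (K2_subset_sigmaTwo hpK.1) (K2_subset_sigmaTwo hpK.2))⟩

theorem stmt10 {X : Type*} [TopologicalSpace X] [T2Space X]
    (δ : X → X → ℝ≥0∞)
    (hδ0 : ∀ x, δ x x = 0)
    (hδsymm : ∀ x y, δ x y = δ y x)
    (hδtri : ∀ x y z, δ x z ≤ δ x y + δ y z)
    (hδlsc : LowerSemicontinuous (fun p : X × X => δ p.1 p.2))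
    (γ₁ γ₂ γ₃ : I → X)
    (h₁ : Continuous γ₁) (h₂ : Continuous γ₂) (h₃ : Continuous γ₃)
    (hδ₁ : ∀ t : I, Tendsto (fun s => δ (γ₁ s) (γ₁ t)) (𝓝 t) (𝓝 0))
    (hδ₂ : ∀ t : I, Tendsto (fun s => δ (γ₂ s) (γ₂ t)) (𝓝 t) (𝓝 0))
    (hδ₃ : ∀ t : I, Tendsto (fun s => δ (γ₃ s) (γ₃ t)) (𝓝 t) (𝓝 0)) :
    (dA δ γ₁ γ₂ = ⨅ f ∈ SigmaHomeo, dC δ γ₁ (γ₂ ∘ f)) ∧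
    (∃ f₁ ∈ SigmaTwo, ∃ f₂ ∈ SigmaTwo, dC δ (γ₁ ∘ f₁) (γ₂ ∘ f₂) = dA δ γ₁ γ₂) ∧
    dA δ γ₁ γ₃ ≤ dA δ γ₁ γ₂ + dA δ γ₂ γ₃ := by
  refine ⟨key1 δ hδsymm hδtri hδ₁ hδ₂, key2 δ hδlsc γ₁ γ₂ h₁ h₂, ?_⟩
  -- triangle inequality
  refine ENNReal.le_of_forall_pos_le_add fun ε hε hsum => ?_
  have h12top : dA δ γ₁ γ₂ ≠ ⊤ := (lt_of_le_of_lt le_self_add hsum).ne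
  have h23top : dA δ γ₂ γ₃ ≠ ⊤ := (lt_of_le_of_lt le_add_self hsum).ne
  have hε2 : ((ε:ℝ≥0∞)/2) ≠ 0 := by
    apply (ENNReal.div_pos (by exact_mod_cast hε.ne') (by norm_num)).ne'
  have e12 := key1 δ hδsymm hδtri hδ₁ hδ₂
  have e23 := key1 δ hδsymm hδtri hδ₂ hδ₃
  have h12 : (⨅ f ∈ SigmaHomeo, dC δ γ₁ (γ₂ ∘ f)) < dA δ γ₁ γ₂ + (ε:ℝ≥0∞)/2 := by
    rw [← e12]; exact ENNReal.lt_add_right h12top hε2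
  have h23 : (⨅ f ∈ SigmaHomeo, dC δ γ₂ (γ₃ ∘ f)) < dA δ γ₂ γ₃ + (ε:ℝ≥0∞)/2 := by
    rw [← e23]; exact ENNReal.lt_add_right h23top hε2
  rw [iInf_lt_iff] at h12
  obtain ⟨f, h12⟩ := h12
  rw [iInf_lt_iff] at h12
  obtain ⟨hf, h12⟩ := h12
  rw [iInf_lt_iff] at h23
  obtain ⟨f', h23⟩ := h23
  rw [iInf_lt_iff] at h23
  obtain ⟨hf', h23⟩ := h23
  have hmem : f' ∘ f ∈ SigmaAll := sigmaHomeo_subset (sigmaHomeo_comp hf' hf)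
  have step1 : dA δ γ₁ γ₃ ≤ dC δ γ₁ (γ₃ ∘ (f' ∘ f)) := by
    have := dA_le_dC δ γ₁ γ₃ id_mem_sigmaAll hmem
    simpa using this
  have step2 : dC δ γ₁ (γ₃ ∘ (f' ∘ f)) ≤ dC δ γ₁ (γ₂ ∘ f) + dC δ (γ₂ ∘ f) (γ₃ ∘ (f' ∘ f)) :=
    dC_triangle δ hδtri _ _ _
  have step3 : dC δ (γ₂ ∘ f) (γ₃ ∘ (f' ∘ f)) = dC δ γ₂ (γ₃ ∘ f') := by
    have : γ₃ ∘ (f' ∘ f) = (γ₃ ∘ f') ∘ f := rfl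
    rw [this]
    exact dC_comp_surj δ γ₂ (γ₃ ∘ f') hf.2.2
  calc dA δ γ₁ γ₃ ≤ dC δ γ₁ (γ₂ ∘ f) + dC δ (γ₂ ∘ f) (γ₃ ∘ (f' ∘ f)) := step1.trans step2
    _ = dC δ γ₁ (γ₂ ∘ f) + dC δ γ₂ (γ₃ ∘ f') := by rw [step3]
    _ ≤ (dA δ γ₁ γ₂ + (ε:ℝ≥0∞)/2) + (dA δ γ₂ γ₃ + (ε:ℝ≥0∞)/2) := add_le_add h12.le h23.le
    _ = (dA δ γ₁ γ₂ + dA δ γ₂ γ₃) + ((ε:ℝ≥0∞)/2 + (ε:ℝ≥0∞)/2) := by abel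
    _ = dA δ γ₁ γ₂ + dA δ γ₂ γ₃ + ε := by rw [ENNReal.add_halves]
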